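/- If q is a polynomial of degree ≤ k−1 interpolating the averages (w̄_j) of a Lipschitz function over k consecutive cells of a uniform mesh of width h, then ‖q′‖_{L∞(I)} ≤ C on the union I of the stencil cells, where C depends only on k and the Lipschitz constant of w (not on h). -/

import Mathlib

open Polynomial intervalIntegral Set

lemma poly_intervalIntegrable (p : Polynomial ℝ) (a b : ℝ) :
    IntervalIntegrable (fun t => p.eval t) MeasureTheory.volume a b :=
  (p.continuous_aeval).intervalIntegrable a b

lemma avg_zero_eq_zero (k : ℕ) (p : Polynomial ℝ) (hdeg : p.degree < k)
    (hz : ∀ j : ℕ, j < k → ∫ t in (j:ℝ)..(j+1:ℝ), p.eval t = 0) : p = 0 := by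
  by_contra hp
  have hnd : p.natDegree < k := by
    rwa [← Polynomial.natDegree_lt_iff_degree_lt hp] at hdeg
  set F : ℝ → ℝ := fun x => ∫ t in (0:ℝ)..x, p.eval t with hF
  have hderiv : ∀ x : ℝ, HasDerivAt F (p.eval x) x := fun x =>
    ((p.continuous_aeval).integral_hasStrictDerivAt 0 x).hasDerivAt
  -- roots in each open interval
  have hroot : ∀ j : ℕ, j < k → ∃ c ∈ Set.Ioo (j:ℝ) (j+1:ℝ), p.eval c = 0 := by
    intro j hj
    have heq : F (j:ℝ) = F ((j:ℝ)+1) := by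
      have := intervalIntegral.integral_add_adjacent_intervals
        (poly_intervalIntegrable p 0 j) (poly_intervalIntegrable p j (j+1))
      rw [hz j hj, add_zero] at this
      simp [hF, this]
    have hcont : ContinuousOn F (Set.Icc (j:ℝ) ((j:ℝ)+1)) :=
      fun x _ => ((hderiv x).continuousAt).continuousWithinAt
    obtain ⟨c, hc, hc0⟩ := exists_deriv_eq_zero (by linarith) hcont heq
    exact ⟨c, hc, by rw [← (hderiv c).deriv]; exact hc0⟩
  choose c hc hc0 using hroot
  have hcf : ∀ j : Fin k, p.eval (c j j.2) = 0 := fun j => hc0 j j.2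
  have hinj : Function.Injective (fun j : Fin k => c j j.2) := by
    intro i j hij
    by_contra hne
    rcases lt_or_gt_of_ne (Fin.val_ne_of_ne hne) with hlt | hlt
    · have h1 := (hc i i.2).2
      have h2 := (hc j j.2).1
      have : (i:ℝ) + 1 ≤ (j:ℝ) := by exact_mod_cast hlt
      simp only at hij
      linarith
    · have h1 := (hc j j.2).2
      have h2 := (hc i i.2).1
      have : (j:ℝ) + 1 ≤ (i:ℝ) := by exact_mod_cast hlt
      simp only at hij
      linarith
  exact hp (Polynomial.eq_zero_of_natDegree_lt_card_of_eval_eq_zero p hinj hcf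
    (by simpa using hnd))

noncomputable def cellInt (k : ℕ) : (Fin k → ℝ) →ₗ[ℝ] (Fin k → ℝ) where
  toFun c := fun j => ∑ i : Fin k,
    c i * ((((j:ℝ)+1)^((i:ℕ)+1) - (j:ℝ)^((i:ℕ)+1))/((i:ℕ)+1))
  map_add' c d := by
    funext j
    simp [add_mul, Finset.sum_add_distrib]
  map_smul' r c := by
    funext j
    simp [Finset.mul_sum, mul_assoc]

lemma cellInt_eq (k : ℕ) (hk : 1 ≤ k) (p : Polynomial ℝ) (hdeg : p.degree < k) (j : Fin k) :
    cellInt k (fun i : Fin k => p.coeff i) j = ∫ t in (j:ℝ)..((j:ℝ)+1), p.eval t := by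
  have hnd : p.natDegree < k := by
    rcases eq_or_ne p 0 with rfl | hp
    · simpa using (by omega : 0 < k)
    · rwa [← Polynomial.natDegree_lt_iff_degree_lt hp] at hdeg
  have heval : ∀ t : ℝ, p.eval t = ∑ i ∈ Finset.range k, p.coeff i * t ^ i := fun t =>
    Polynomial.eval_eq_sum_range' hnd t
  rw [show (∫ t in (j:ℝ)..((j:ℝ)+1), p.eval t)
      = ∫ t in (j:ℝ)..((j:ℝ)+1), ∑ i ∈ Finset.range k, p.coeff i * t ^ i from
    intervalIntegral.integral_congr (fun t _ => heval t)]
  rw [intervalIntegral.integral_finset_sum (f := fun i t => p.coeff i * t ^ i) (fun i _ =>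
    ((continuous_const.mul (continuous_pow i) : Continuous (fun t : ℝ => p.coeff i * t ^ i)).intervalIntegrable _ _))]
  rw [cellInt]
  simp only [LinearMap.coe_mk, AddHom.coe_mk]
  rw [← Fin.sum_univ_eq_sum_range (fun i => ∫ t in (j:ℝ)..((j:ℝ)+1), p.coeff i * t ^ i)]
  congr 1
  funext i
  rw [intervalIntegral.integral_const_mul, integral_pow]

noncomputable def finPoly (k : ℕ) (c : Fin k → ℝ) : Polynomial ℝ :=
  ∑ i : Fin k, Polynomial.monomial (i : ℕ) (c i)

lemma finPoly_coeff (k : ℕ) (c : Fin k → ℝ) (i : Fin k) :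
    (finPoly k c).coeff i = c i := by
  rw [finPoly, Polynomial.finset_sum_coeff]
  rw [Finset.sum_eq_single i]
  · simp
  · intro b _ hb
    rw [Polynomial.coeff_monomial, if_neg]
    intro h
    exact hb (Fin.ext (by exact_mod_cast h))
  · simp
lemma finPoly_degree (k : ℕ) (c : Fin k → ℝ) : (finPoly k c).degree < k := by
  refine lt_of_le_of_lt (Polynomial.degree_sum_le _ _) ?_
  rw [Finset.sup_lt_iff (by exact_mod_cast WithBot.bot_lt_coe (k:ℕ))]
  intro i _
  exact lt_of_le_of_lt (Polynomial.degree_monomial_le _ _) (by exact_mod_cast i.2)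

lemma cellInt_injective (k : ℕ) (hk : 1 ≤ k) : Function.Injective (cellInt k) := by
  rw [← LinearMap.ker_eq_bot, LinearMap.ker_eq_bot']
  intro c hc
  have hp : finPoly k c = 0 := by
    apply avg_zero_eq_zero k _ (finPoly_degree k c)
    intro j hj
    have hthis := congrFun hc ⟨j, hj⟩
    have h2 := cellInt_eq k hk (finPoly k c) (finPoly_degree k c) ⟨j, hj⟩
    rw [show (fun i : Fin k => (finPoly k c).coeff (i:ℕ)) = c from
      funext (finPoly_coeff k c)] at h2
    rw [← h2, hthis]
    rfl
  funext i
  rw [← finPoly_coeff k c i, hp]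
  simp

lemma exists_deriv_bound (k : ℕ) (hk : 1 ≤ k) :
    ∃ M : ℝ, 0 ≤ M ∧ ∀ p : Polynomial ℝ, p.degree < k → ∀ ε : ℝ, 0 ≤ ε →
      (∀ j : Fin k, |∫ t in (j:ℝ)..((j:ℝ)+1), p.eval t| ≤ ε) →
      ∀ y ∈ Set.Icc (0:ℝ) (k:ℝ), |p.derivative.eval y| ≤ M * ε := by
  obtain ⟨K, hK, hanti⟩ := (cellInt k).exists_antilipschitzWith
    (LinearMap.ker_eq_bot.mpr (cellInt_injective k hk))
  have hC : ∀ c : Fin k → ℝ, ‖c‖ ≤ K * ‖cellInt k c‖ := by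
    intro c
    have := hanti.le_mul_dist c 0
    simpa [dist_zero_right, map_zero] using this
  set S : ℝ := ∑ i ∈ Finset.range k, ((i:ℝ)+1) * (k:ℝ)^i with hS
  have hS0 : 0 ≤ S := Finset.sum_nonneg fun i _ => by positivity
  refine ⟨K * S, by positivity, ?_⟩
  intro p hdeg ε hε hint y hy
  set c : Fin k → ℝ := fun i => p.coeff i with hc
  have hnormΦ : ‖cellInt k c‖ ≤ ε := by
    rw [pi_norm_le_iff_of_nonneg hε]
    intro j
    rw [Real.norm_eq_abs, cellInt_eq k hk p hdeg j]
    exact hint j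
  have hnc : ‖c‖ ≤ K * ε :=
    (hC c).trans (by
      have : (K:ℝ) * ‖cellInt k c‖ ≤ K * ε :=
        mul_le_mul_of_nonneg_left hnormΦ (by positivity)
      exact this)
  -- derivative bound
  have hder : |p.derivative.eval y| ≤ S * ‖c‖ := by
    rcases eq_or_ne p.derivative 0 with h0 | h0
    · rw [h0]
      simp only [Polynomial.eval_zero, abs_zero]
      positivity
    · have hdd : p.derivative.natDegree < k := by
        exact (Polynomial.natDegree_lt_iff_degree_lt h0).mpr
          (lt_of_le_of_lt Polynomial.degree_derivative_le hdeg)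
      rw [Polynomial.eval_eq_sum_range' hdd]
      calc |∑ i ∈ Finset.range k, p.derivative.coeff i * y ^ i|
          ≤ ∑ i ∈ Finset.range k, |p.derivative.coeff i * y ^ i| :=
            Finset.abs_sum_le_sum_abs _ _
        _ ≤ ∑ i ∈ Finset.range k, (((i:ℝ)+1) * (k:ℝ)^i) * ‖c‖ := by
            apply Finset.sum_le_sum
            intro i hi
            rw [abs_mul, Polynomial.coeff_derivative, abs_mul]
            have hcoef : |p.coeff (i+1)| ≤ ‖c‖ := by
              by_cases hik : i + 1 < k
              · have := norm_le_pi_norm c ⟨i+1, hik⟩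
                simpa [hc, Real.norm_eq_abs] using this
              · rw [Polynomial.coeff_eq_zero_of_degree_lt
                  (hdeg.trans_le (by exact_mod_cast Nat.le_of_not_lt hik))]
                simp [norm_nonneg]
            have hyk : |y ^ i| ≤ (k:ℝ)^i := by
              rw [abs_pow]
              exact pow_le_pow_left₀ (abs_nonneg y)
                (by rw [abs_of_nonneg hy.1]; exact hy.2) i
            have habs : |((i:ℝ)+1 : ℝ)| = (i:ℝ)+1 := by
              rw [abs_of_nonneg]; positivity
            calc |p.coeff (i+1)| * |((i:ℝ)+1)| * |y ^ i|
                ≤ ‖c‖ * ((i:ℝ)+1) * (k:ℝ)^i := by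
                  rw [habs]
                  apply mul_le_mul (mul_le_mul hcoef le_rfl (by positivity) (norm_nonneg c))
                    hyk (abs_nonneg _) (by positivity)
              _ = (((i:ℝ)+1) * (k:ℝ)^i) * ‖c‖ := by ring
        _ = S * ‖c‖ := by rw [hS, Finset.sum_mul]
  calc |p.derivative.eval y| ≤ S * ‖c‖ := hder
    _ ≤ S * (K * ε) := mul_le_mul_of_nonneg_left hnc hS0
    _ = (K * S) * ε := by ring

lemma exists_deriv_bound_diff (k : ℕ) (hk : 1 ≤ k) :
    ∃ M : ℝ, 0 ≤ M ∧ ∀ p : Polynomial ℝ, p.degree < k → ∀ ε : ℝ, 0 ≤ ε →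
      (∀ j : ℕ, j + 1 < k →
        |(∫ t in ((j:ℝ)+1)..((j:ℝ)+1+1), p.eval t) - ∫ t in (j:ℝ)..((j:ℝ)+1), p.eval t| ≤ ε) →
      ∀ y ∈ Set.Icc (0:ℝ) (k:ℝ), |p.derivative.eval y| ≤ M * ε := by
  obtain ⟨M, hM0, hM⟩ := exists_deriv_bound k hk
  refine ⟨M * k, by positivity, ?_⟩
  intro p hdeg ε hε hdiff y hy
  set A : ℕ → ℝ := fun j => ∫ t in (j:ℝ)..((j:ℝ)+1), p.eval t with hA
  set p' : Polynomial ℝ := p - Polynomial.C (A 0) with hp'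
  have hdeg' : p'.degree < k := by
    apply lt_of_le_of_lt (Polynomial.degree_sub_le _ _)
    rw [max_lt_iff]
    refine ⟨hdeg, lt_of_le_of_lt Polynomial.degree_C_le ?_⟩
    exact_mod_cast Nat.pos_of_ne_zero (Nat.one_le_iff_ne_zero.mp hk)
  have hA' : ∀ j : Fin k, (∫ t in ((j:ℝ))..((j:ℝ)+1), p'.eval t) = A j - A 0 := by
    intro j
    rw [hp']
    have : ∀ t : ℝ, (p - Polynomial.C (A 0)).eval t = p.eval t - A 0 := by
      intro t; simp
    rw [intervalIntegral.integral_congr (fun t _ => this t),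
      intervalIntegral.integral_sub (poly_intervalIntegrable p _ _)
        (intervalIntegrable_const)]
    simp [hA]
  have htel : ∀ j : ℕ, j < k → |A j - A 0| ≤ (j:ℝ) * ε := by
    intro j
    induction j with
    | zero => intro _; simp
    | succ n ih =>
      intro hn
      have h1 : n < k := Nat.lt_of_succ_lt hn
      have h2 := hdiff n (by omega)
      have h3 := ih h1
      have : A (n+1) - A 0 = (A (n+1) - A n) + (A n - A 0) := by ring
      rw [this]
      calc |(A (n+1) - A n) + (A n - A 0)| ≤ |A (n+1) - A n| + |A n - A 0| := abs_add_le _ _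
        _ ≤ ε + (n:ℝ) * ε := by
            apply add_le_add _ h3
            have : A (n+1) = ∫ t in ((n:ℝ)+1)..((n:ℝ)+1+1), p.eval t := by
              rw [hA]; push_cast; ring_nf
            rw [this]; exact h2
        _ = ((n:ℝ)+1) * ε := by ring
        _ = ((n+1 : ℕ):ℝ) * ε := by push_cast; ring
  have hbound : ∀ j : Fin k, |∫ t in ((j:ℝ))..((j:ℝ)+1), p'.eval t| ≤ (k:ℝ) * ε := by
    intro j
    rw [hA' j]
    refine (htel j j.2).trans (mul_le_mul_of_nonneg_right ?_ hε)
    exact_mod_cast Nat.le_of_lt j.2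
  have := hM p' hdeg' ((k:ℝ)*ε) (by positivity) hbound y hy
  have hpd : p'.derivative = p.derivative := by
    rw [hp']; simp
  rw [hpd] at this
  calc |p.derivative.eval y| ≤ M * ((k:ℝ)*ε) := this
    _ = (M * k) * ε := by ring

/-- If a polynomial `q` of degree ≤ k−1 interpolates the cell averages of an
`L`-Lipschitz function over `k` consecutive cells of a uniform mesh of width `h`
(cell `I_j = [a + (j−1)h, a + jh]`), then `|q′| ≤ C` on the union of the stencil
cells, where `C` depends only on `k` and `L` (not on `h`, `a`, `w`, `s` or `q`). -/
theorem lipschitz_average_interpolant_derivative_bound (k : ℕ) (hk : 1 ≤ k) (L : NNReal) :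
    ∃ C : ℝ, ∀ (h : ℝ), 0 < h → ∀ (a : ℝ) (w : ℝ → ℝ), LipschitzWith L w →
      ∀ (s : ℤ) (q : Polynomial ℝ), q.degree < k →
        (∀ j : ℤ, s ≤ j → j ≤ s + k - 1 →
          ∫ t in (a + ((j : ℝ) - 1) * h)..(a + (j : ℝ) * h), q.eval t =
          ∫ t in (a + ((j : ℝ) - 1) * h)..(a + (j : ℝ) * h), w t) →
        ∀ t ∈ Set.Icc (a + ((s : ℝ) - 1) * h) (a + ((s : ℝ) + k - 1) * h),
          |q.derivative.eval t| ≤ C := by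
  obtain ⟨M, hM0, hM⟩ := exists_deriv_bound_diff k hk
  refine ⟨M * L, ?_⟩
  intro h hh a w hw s q hqdeg havg t ht
  set d : ℝ := a + ((s:ℝ) - 1) * h with hd
  set p : Polynomial ℝ := q.comp (Polynomial.C d + Polynomial.C h * Polynomial.X) with hp
  have hkbot : (⊥ : WithBot ℕ) < (k : WithBot ℕ) := WithBot.bot_lt_coe k
  have hpdeg : p.degree < k := by
    rcases eq_or_ne q 0 with rfl | hq0
    · rw [hp, Polynomial.zero_comp, Polynomial.degree_zero]
      exact hkbot
    have hqnd : q.natDegree < k := (Polynomial.natDegree_lt_iff_degree_lt hq0).mpr hqdeg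
    rcases eq_or_ne p 0 with hp0 | hp0
    · rw [hp0, Polynomial.degree_zero]
      exact hkbot
    · rw [← Polynomial.natDegree_lt_iff_degree_lt hp0, hp, Polynomial.natDegree_comp]
      have hlinnd : (Polynomial.C d + Polynomial.C h * Polynomial.X).natDegree = 1 := by
        rw [add_comm]
        exact Polynomial.natDegree_linear (ne_of_gt hh)
      rw [hlinnd, mul_one]
      exact hqnd
  have hpeval : ∀ y : ℝ, p.eval y = q.eval (d + h * y) := by
    intro y
    rw [hp, Polynomial.eval_comp]
    simp
  -- cell integral of p in terms of q over physical cell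
  have hcell : ∀ j : ℕ, (∫ y in (j:ℝ)..((j:ℝ)+1), p.eval y)
      = h⁻¹ * ∫ u in (d + h * j)..(d + h * ((j:ℝ)+1)), q.eval u := by
    intro j
    rw [intervalIntegral.integral_congr (fun y _ => hpeval y)]
    rw [intervalIntegral.integral_comp_add_mul (fun u => q.eval u) (ne_of_gt hh) d]
    simp [smul_eq_mul]
  -- physical cells correspond to hypothesis cells with J = s + j
  have hphys : ∀ j : ℕ, j < k → (∫ u in (d + h * j)..(d + h * ((j:ℝ)+1)), q.eval u)
      = ∫ u in (d + h * j)..(d + h * ((j:ℝ)+1)), w u := by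
    intro j hj
    have := havg (s + j) (by omega) (by omega)
    have e1 : a + (((s + (j:ℤ) : ℤ):ℝ) - 1) * h = d + h * j := by push_cast [hd]; ring
    have e2 : a + ((s + (j:ℤ) : ℤ):ℝ) * h = d + h * ((j:ℝ)+1) := by push_cast [hd]; ring
    rwa [e1, e2] at this
  -- w-average differences bounded
  have hwdiff : ∀ j : ℕ,
      |(∫ u in (d + h * ((j:ℝ)+1))..(d + h * ((j:ℝ)+1+1)), w u)
        - ∫ u in (d + h * j)..(d + h * ((j:ℝ)+1)), w u| ≤ (L : ℝ) * h * h := by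
    intro j
    have hshift : (∫ u in (d + h * ((j:ℝ)+1))..(d + h * ((j:ℝ)+1+1)), w u)
        = ∫ u in (d + h * j)..(d + h * ((j:ℝ)+1)), w (u + h) := by
      rw [intervalIntegral.integral_comp_add_right (fun u => w u) h]
      congr 1 <;> ring
    have hi1 : IntervalIntegrable (fun u => w (u + h)) MeasureTheory.volume
        (d + h * j) (d + h * ((j:ℝ)+1)) := by
      apply Continuous.intervalIntegrable
      exact hw.continuous.comp (continuous_add_right h)
    have hi2 : IntervalIntegrable w MeasureTheory.volume
        (d + h * j) (d + h * ((j:ℝ)+1)) := (hw.continuous).intervalIntegrable _ _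
    rw [hshift, ← intervalIntegral.integral_sub hi1 hi2]
    have hb : ∀ x ∈ Set.uIoc (d + h * j) (d + h * ((j:ℝ)+1)), ‖w (x + h) - w x‖ ≤ (L:ℝ) * h := by
      intro x _
      have h1 := hw.dist_le_mul (x + h) x
      rw [Real.dist_eq, Real.dist_eq] at h1
      calc ‖w (x + h) - w x‖ = |w (x + h) - w x| := Real.norm_eq_abs _
        _ ≤ (L:ℝ) * |x + h - x| := h1
        _ = (L:ℝ) * h := by rw [show x + h - x = h by ring, abs_of_pos hh]
    calc ‖∫ u in (d + h * j)..(d + h * ((j:ℝ)+1)), (w (u + h) - w u)‖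
        ≤ (L:ℝ) * h * |(d + h * ((j:ℝ)+1)) - (d + h * j)| :=
          intervalIntegral.norm_integral_le_of_norm_le_const hb
      _ = (L:ℝ) * h * h := by rw [show (d + h * ((j:ℝ)+1)) - (d + h * j) = h by ring,
            abs_of_pos hh]
  -- p-cell-average differences bounded by L * h
  have hpdiff : ∀ j : ℕ, j + 1 < k →
      |(∫ y in ((j:ℝ)+1)..((j:ℝ)+1+1), p.eval y) - ∫ y in (j:ℝ)..((j:ℝ)+1), p.eval y|
        ≤ (L:ℝ) * h := by
    intro j hj
    have hA1 := hcell (j+1)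
    have hA0 := hcell j
    rw [hphys (j+1) hj] at hA1
    rw [hphys j (by omega)] at hA0
    push_cast at hA1
    rw [hA1, hA0, ← mul_sub, abs_mul, abs_of_pos (inv_pos.mpr hh)]
    calc h⁻¹ * |(∫ u in (d + h * ((j:ℝ)+1))..(d + h * ((j:ℝ)+1+1)), w u)
          - ∫ u in (d + h * j)..(d + h * ((j:ℝ)+1)), w u|
        ≤ h⁻¹ * ((L:ℝ) * h * h) :=
          mul_le_mul_of_nonneg_left (hwdiff j) (le_of_lt (inv_pos.mpr hh))
      _ = (L:ℝ) * h := by field_simp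
  -- apply the bound
  set y : ℝ := (t - d) / h with hy
  have hdk : a + ((s:ℝ) + (k:ℝ) - 1) * h = d + (k:ℝ) * h := by rw [hd]; ring
  have hy0 : y ∈ Set.Icc (0:ℝ) (k:ℝ) := by
    constructor
    · apply div_nonneg _ (le_of_lt hh)
      have := ht.1
      linarith
    · rw [hy, div_le_iff₀ hh]
      have h2 := ht.2
      rw [hdk] at h2
      linarith
  have hkey := hM p hpdeg ((L:ℝ) * h) (by positivity) hpdiff y hy0
  have hpder : p.derivative.eval y = h * q.derivative.eval t := by
    rw [hp, Polynomial.derivative_comp]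
    simp only [Polynomial.derivative_add, Polynomial.derivative_C, Polynomial.derivative_mul,
      Polynomial.derivative_X, Polynomial.eval_mul, Polynomial.eval_comp]
    have hdy : d + h * y = t := by rw [hy]; field_simp; ring
    simp [hdy]
  rw [hpder, abs_mul, abs_of_pos hh] at hkey
  have hfin : |q.derivative.eval t| ≤ (M * (L:ℝ) * h) / h := by
    rw [le_div_iff₀ hh]
    calc |q.derivative.eval t| * h = h * |q.derivative.eval t| := by ring
      _ ≤ M * ((L:ℝ) * h) := hkey
      _ = M * (L:ℝ) * h := by ring
  rwa [mul_div_assoc, div_self (ne_of_gt hh), mul_one] at hfin
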